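/- Suppose interferers are located so that, for each positive integer t, there are at most 8t interferers at distance at least (4t−1)d from a receiver, each transmitting with power P₀ d^α, and the channel gain at distance r is r^{−α} with α > 2. Then the total interference is bounded above by the constant P₀ ∑_{t=1}^∞ 8t(4t−1)^{−α} < ∞, independent of d. -/
import Mathlib


/-- Interference bound for the 25-TDMA scheme: if for every `t ≥ 1` there are
at most `8t` interferers in ring `t`, each at distance at least `(4t-1)d` and
transmitting with power `P₀ d^α`, and the channel gain at distance `r` is
`r^{-α}` with `α > 2`, then the total interference is bounded by the constant
`P₀ ∑_{t=1}^∞ 8t (4t-1)^{-α}`, which is finite, independently of `d`. -/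
theorem interference_bound (α P₀ d : ℝ) (hα : 2 < α) (hP : 0 < P₀) (hd : 0 < d)
    {ι : Type*} (ring : ι → ℕ) (r : ι → ℝ)
    (hring : ∀ i, 1 ≤ ring i)
    (hr : ∀ i, (4 * (ring i : ℝ) - 1) * d ≤ r i)
    (hcard : ∀ t : ℕ, 1 ≤ t → {i : ι | ring i = t}.Finite ∧
      {i : ι | ring i = t}.ncard ≤ 8 * t) :
    Summable (fun t : ℕ => 8 * ((t : ℝ) + 1) * (4 * ((t : ℝ) + 1) - 1) ^ (-α)) ∧
      (∑' i : ι, P₀ * d ^ α * (r i) ^ (-α))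
        ≤ P₀ * ∑' t : ℕ, 8 * ((t : ℝ) + 1) * (4 * ((t : ℝ) + 1) - 1) ^ (-α) := by
  classical
  set f : ℕ → ℝ := fun t => 8 * ((t : ℝ) + 1) * (4 * ((t : ℝ) + 1) - 1) ^ (-α) with hf
  -- summability of f
  have hfnonneg : ∀ t, 0 ≤ f t := by
    intro t
    have h1 : (0:ℝ) ≤ 8 * ((t:ℝ)+1) := by positivity
    have h2 : (0:ℝ) ≤ (4 * ((t : ℝ) + 1) - 1) ^ (-α) := by
      apply Real.rpow_nonneg; nlinarith [Nat.cast_nonneg (α := ℝ) t]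
    exact mul_nonneg h1 h2
  have hsum_f : Summable f := by
    have hbase : Summable fun n : ℕ => ((n:ℝ)+1) ^ (1 - α) := by
      have := (Real.summable_nat_rpow (p := 1 - α)).2 (by linarith)
      have := (summable_nat_add_iff (f := fun n : ℕ => (n:ℝ) ^ (1-α)) 1).2 this
      simpa [Nat.cast_add] using this
    apply Summable.of_nonneg_of_le hfnonneg _ (hbase.mul_left 8)
    intro t
    have ht : (0:ℝ) < (t:ℝ)+1 := by positivity
    have hle : ((t:ℝ)+1) ≤ 4 * ((t : ℝ) + 1) - 1 := by nlinarith
    have h1 : (4 * ((t : ℝ) + 1) - 1) ^ (-α) ≤ ((t:ℝ)+1) ^ (-α) :=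
      Real.rpow_le_rpow_of_nonpos ht hle (by linarith)
    have h2 : 8 * ((t:ℝ)+1) * (4 * ((t : ℝ) + 1) - 1) ^ (-α)
        ≤ 8 * ((t:ℝ)+1) * (((t:ℝ)+1) ^ (-α)) := by
      apply mul_le_mul_of_nonneg_left h1 (by positivity)
    calc f t ≤ 8 * ((t:ℝ)+1) * (((t:ℝ)+1) ^ (-α)) := h2
      _ = 8 * (((t:ℝ)+1) ^ (1:ℝ) * ((t:ℝ)+1) ^ (-α)) := by
          rw [Real.rpow_one]; ring
      _ = 8 * ((t:ℝ)+1) ^ (1 - α) := by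
          rw [← Real.rpow_add ht]; ring_nf
  refine ⟨hsum_f, ?_⟩
  -- the fiberwise bound function
  set h : ℕ → ℝ := fun t => P₀ * (8 * (t:ℝ) * (4 * (t:ℝ) - 1) ^ (-α)) with hh
  have hh_succ : ∀ n : ℕ, h (n+1) = P₀ * f n := by
    intro n; simp only [hh, hf]; push_cast; ring_nf
  have hh0 : h 0 = 0 := by simp [hh]
  have hhnonneg : ∀ t, 0 ≤ h t := by
    intro t
    rcases Nat.eq_zero_or_pos t with h0 | h1
    · simp [h0, hh0]
    · have : (0:ℝ) ≤ (4 * (t:ℝ) - 1) ^ (-α) := by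
        apply Real.rpow_nonneg
        have : (1:ℝ) ≤ (t:ℝ) := by exact_mod_cast h1
        nlinarith
      have : (0:ℝ) ≤ 8 * (t:ℝ) * (4 * (t:ℝ) - 1) ^ (-α) := by positivity
      exact mul_nonneg hP.le this
  have hsum_h : Summable h := by
    rw [← summable_nat_add_iff 1]
    simp only [hh_succ]
    exact hsum_f.mul_left P₀
  have htsum_h : ∑' t, h t = P₀ * ∑' t, f t := by
    rw [Summable.tsum_eq_zero_add hsum_h, hh0, zero_add]
    simp only [hh_succ]
    exact tsum_mul_left
  rw [← htsum_h]
  -- termwise bound: a i ≤ P₀ * (4 ring i - 1)^(-α)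
  have hterm : ∀ i, P₀ * d ^ α * (r i) ^ (-α) ≤ P₀ * (4 * (ring i : ℝ) - 1) ^ (-α) := by
    intro i
    have h1 : (1:ℝ) ≤ (ring i : ℝ) := by exact_mod_cast hring i
    have hbpos : (0:ℝ) < 4 * (ring i : ℝ) - 1 := by nlinarith
    have hrd : 0 < (4 * (ring i : ℝ) - 1) * d := mul_pos hbpos hd
    have h2 : (r i) ^ (-α) ≤ ((4 * (ring i : ℝ) - 1) * d) ^ (-α) :=
      Real.rpow_le_rpow_of_nonpos hrd (hr i) (by linarith)
    have h3 : ((4 * (ring i : ℝ) - 1) * d) ^ (-α)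
        = (4 * (ring i : ℝ) - 1) ^ (-α) * d ^ (-α) :=
      Real.mul_rpow hbpos.le hd.le
    have h4 : d ^ α * ((4 * (ring i : ℝ) - 1) ^ (-α) * d ^ (-α))
        = (4 * (ring i : ℝ) - 1) ^ (-α) := by
      rw [Real.rpow_neg hd.le, mul_comm ((4 * (ring i : ℝ) - 1) ^ (-α)),
        ← mul_assoc, mul_inv_cancel₀ (by positivity : d ^ α ≠ 0), one_mul]
    calc P₀ * d ^ α * (r i) ^ (-α)
        ≤ P₀ * d ^ α * (((4 * (ring i : ℝ) - 1) * d) ^ (-α)) := by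
          apply mul_le_mul_of_nonneg_left h2 (by positivity)
      _ = P₀ * (d ^ α * ((4 * (ring i : ℝ) - 1) ^ (-α) * d ^ (-α))) := by
          rw [h3]; ring
      _ = P₀ * (4 * (ring i : ℝ) - 1) ^ (-α) := by rw [h4]
  -- main bound via finite partial sums
  apply tsum_le_of_sum_le' (tsum_nonneg hhnonneg)
  intro s
  set g : ℕ → ℝ := fun t => P₀ * (4 * (t:ℝ) - 1) ^ (-α) with hg
  have step1 : ∑ i ∈ s, P₀ * d ^ α * (r i) ^ (-α) ≤ ∑ i ∈ s, g (ring i) :=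
    Finset.sum_le_sum fun i _ => hterm i
  have step2 : ∑ i ∈ s, g (ring i) ≤ ∑ t ∈ s.image ring, h t := by
    rw [← Finset.sum_fiberwise_of_maps_to (fun i hi => Finset.mem_image_of_mem ring hi)
      (fun i => g (ring i))]
    apply Finset.sum_le_sum
    intro t ht
    obtain ⟨i₀, _, hi₀⟩ := Finset.mem_image.1 ht
    have ht1 : 1 ≤ t := hi₀ ▸ hring i₀
    have hgt : (0:ℝ) ≤ (4 * (t:ℝ) - 1) ^ (-α) := by
      apply Real.rpow_nonneg
      have : (1:ℝ) ≤ (t:ℝ) := by exact_mod_cast ht1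
      nlinarith
    have hfib : ∑ i ∈ s.filter (fun i => ring i = t), g (ring i)
        = (s.filter (fun i => ring i = t)).card * g t := by
      rw [Finset.sum_congr rfl (fun i hi => by rw [(Finset.mem_filter.1 hi).2]),
        Finset.sum_const, nsmul_eq_mul]
    rw [hfib]
    have hclt : (s.filter (fun i => ring i = t)).card ≤ 8 * t := by
      have hsub : ↑(s.filter (fun i => ring i = t)) ⊆ {i : ι | ring i = t} := by
        intro i hi
        exact (Finset.mem_filter.1 hi).2
      calc (s.filter (fun i => ring i = t)).card
          = (↑(s.filter (fun i => ring i = t)) : Set ι).ncard := by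
            rw [Set.ncard_coe_finset]
        _ ≤ {i : ι | ring i = t}.ncard := Set.ncard_le_ncard hsub (hcard t ht1).1
        _ ≤ 8 * t := (hcard t ht1).2
    have hgnn : 0 ≤ g t := mul_nonneg hP.le hgt
    calc ((s.filter (fun i => ring i = t)).card : ℝ) * g t
        ≤ (8 * t : ℕ) * g t := by
          apply mul_le_mul_of_nonneg_right _ hgnn
          exact_mod_cast hclt
      _ = h t := by simp only [hh, hg]; push_cast; ring
  have step3 : ∑ t ∈ s.image ring, h t ≤ ∑' t, h t :=
    Summable.sum_le_tsum _ (fun t _ => hhnonneg t) hsum_h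
  linarith
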